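/- Let f : (α, β) → ℝ be a nonnegative function with sup f < 4 · inf f (where both are finite and the infimum is over (α, β)). Then f belongs to class Q on (α, β), i.e., for all x ≤ z in (α, β) and all 0 < τ < 1, f((1−τ)x + τz) ≤ f(x)/(1−τ) + f(z)/τ. -/
import Mathlib


theorem classQ_of_sup_lt_four_inf (α β : ℝ) (hαβ : α < β) (f : ℝ → ℝ)
    (hnonneg : ∀ t ∈ Set.Ioo α β, 0 ≤ f t)
    (hbdd : BddAbove (f '' Set.Ioo α β))
    (hsupinf : sSup (f '' Set.Ioo α β) < 4 * sInf (f '' Set.Ioo α β)) :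
    ∀ x ∈ Set.Ioo α β, ∀ z ∈ Set.Ioo α β, x ≤ z → ∀ τ : ℝ, 0 < τ → τ < 1 →
      f ((1 - τ) * x + τ * z) ≤ f x / (1 - τ) + f z / τ := by
  intro x hx z hz hxz τ hτ0 hτ1
  have h1τ : 0 < 1 - τ := by linarith
  have hmid : (1 - τ) * x + τ * z ∈ Set.Ioo α β := by
    constructor
    · nlinarith [hx.1, hz.1]
    · nlinarith [hx.2, hz.2]
  have hbb : BddBelow (f '' Set.Ioo α β) :=
    ⟨0, by rintro _ ⟨t, ht, rfl⟩; exact hnonneg t ht⟩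
  set m := sInf (f '' Set.Ioo α β) with hm
  have hfmid : f ((1 - τ) * x + τ * z) ≤ sSup (f '' Set.Ioo α β) :=
    le_csSup hbdd ⟨_, hmid, rfl⟩
  have hfx : m ≤ f x := csInf_le hbb ⟨x, hx, rfl⟩
  have hfz : m ≤ f z := csInf_le hbb ⟨z, hz, rfl⟩
  have hm0 : 0 ≤ m := le_csInf ⟨f x, ⟨x, hx, rfl⟩⟩
    (by rintro _ ⟨t, ht, rfl⟩; exact hnonneg t ht)
  have key : 4 * m ≤ m / (1 - τ) + m / τ := by
    rw [div_add_div _ _ (ne_of_gt h1τ) (ne_of_gt hτ0), le_div_iff₀ (by positivity)]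
    nlinarith [sq_nonneg (2 * τ - 1)]
  have h2 : m / (1 - τ) + m / τ ≤ f x / (1 - τ) + f z / τ := by
    gcongr
  linarith
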